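/- Let y₁,…,y_d ≥ 2 be even integers with d ≥ 2. If Σ_{i=1}^{d−1} (d−i)y_i = Σ_{i=k+1}^{d} y_i for some k with 0 ≤ k ≤ d−1, then χ_la(Sp(y₁,…,y_d)) = d+1. -/

import Mathlib

open SimpleGraph

/-- The induced vertex sum of an edge labeling. -/
noncomputable def vertexSum {V : Type*} (G : SimpleGraph V) (f : Sym2 V → ℕ) (x : V) : ℕ :=
  ∑ᶠ y ∈ G.neighborSet x, f s(x, y)

/-- `f` is a local antimagic labeling of `G`. -/
def IsLocalAntimagic {V : Type*} (G : SimpleGraph V) (f : Sym2 V → ℕ) : Prop :=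
  Set.BijOn f G.edgeSet (Set.Icc 1 G.edgeSet.ncard) ∧
  ∀ ⦃x y : V⦄, G.Adj x y → vertexSum G f x ≠ vertexSum G f y

/-- The number of distinct induced vertex labels of `f`. -/
noncomputable def colorCount {V : Type*} (G : SimpleGraph V) (f : Sym2 V → ℕ) : ℕ :=
  (Set.range (vertexSum G f)).ncard

/-- The local antimagic chromatic number. -/
noncomputable def chiLA {V : Type*} (G : SimpleGraph V) : ℕ :=
  sInf {n | ∃ f : Sym2 V → ℕ, IsLocalAntimagic G f ∧ colorCount G f = n}

/-- A pendant vertex: a vertex of degree 1. -/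
def IsPendant {V : Type*} (G : SimpleGraph V) (x : V) : Prop :=
  (G.neighborSet x).ncard = 1

/-- A pendant edge: an edge incident to a pendant vertex. -/
def IsPendantEdge {V : Type*} (G : SimpleGraph V) (e : Sym2 V) : Prop :=
  e ∈ G.edgeSet ∧ ∃ x ∈ e, IsPendant G x

/-- The spider graph with `d` legs of lengths `y i`: the core is `none`, and leg `i`
consists of vertices `some ⟨i, j⟩` for `j : Fin (y i)`, forming a path from the core. -/
def spider (d : ℕ) (y : Fin d → ℕ) : SimpleGraph (Option (Σ i : Fin d, Fin (y i))) :=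
  SimpleGraph.fromRel (fun u v =>
    ∃ (i : Fin d) (j : Fin (y i)), (u = none ∧ v = some ⟨i, j⟩ ∧ (j : ℕ) = 0) ∨
      (∃ k : Fin (y i), u = some ⟨i, j⟩ ∧ v = some ⟨i, k⟩ ∧ (j : ℕ) + 1 = (k : ℕ)))

namespace SpiderAux

variable {d : ℕ} {y : Fin d → ℕ}

abbrev Vtx (d : ℕ) (y : Fin d → ℕ) := Option (Σ i : Fin d, Fin (y i))

lemma sigma_eq_iff (p q : Σ i : Fin d, Fin (y i)) :
    p = q ↔ p.1 = q.1 ∧ (p.2 : ℕ) = (q.2 : ℕ) := by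
  constructor
  · rintro rfl; exact ⟨rfl, rfl⟩
  · obtain ⟨i, j⟩ := p
    obtain ⟨i', j'⟩ := q
    rintro ⟨h1, h2⟩
    dsimp at h1 h2
    subst h1
    exact congrArg _ (Fin.ext h2)

def parV (p : Σ i : Fin d, Fin (y i)) : Vtx d y :=
  if (p.2 : ℕ) = 0 then none
  else some ⟨p.1, ⟨(p.2 : ℕ) - 1, lt_of_le_of_lt (Nat.sub_le _ _) p.2.isLt⟩⟩

lemma parV_eq_none_iff (p : Σ i : Fin d, Fin (y i)) :
    parV p = none ↔ (p.2 : ℕ) = 0 := by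
  unfold parV; split_ifs with h <;> simp [h]

lemma parV_eq_some_iff (p q : Σ i : Fin d, Fin (y i)) :
    parV p = some q ↔ q.1 = p.1 ∧ (q.2 : ℕ) + 1 = (p.2 : ℕ) := by
  unfold parV; split_ifs with h
  · simp; omega
  · rw [Option.some_inj]
    rw [show (⟨p.1, ⟨(p.2 : ℕ) - 1, _⟩⟩ : Σ i : Fin d, Fin (y i)) = q ↔ _ from sigma_eq_iff _ _]
    dsimp
    constructor
    · rintro ⟨h1, h2⟩; exact ⟨h1.symm, by omega⟩
    · rintro ⟨h1, h2⟩; exact ⟨h1.symm, by omega⟩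

lemma parV_ne_some_self (p : Σ i : Fin d, Fin (y i)) : parV p ≠ some p := by
  intro h
  rw [parV_eq_some_iff] at h
  omega

lemma rel_iff (u v : Vtx d y) :
    (∃ (i : Fin d) (j : Fin (y i)), (u = none ∧ v = some ⟨i, j⟩ ∧ (j : ℕ) = 0) ∨
      (∃ k : Fin (y i), u = some ⟨i, j⟩ ∧ v = some ⟨i, k⟩ ∧ (j : ℕ) + 1 = (k : ℕ)))
    ↔ ∃ p, u = parV p ∧ v = some p := by
  constructor
  · rintro ⟨i, j, (⟨rfl, rfl, hj⟩ | ⟨k, rfl, rfl, hk⟩)⟩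
    · exact ⟨⟨i, j⟩, by rw [eq_comm, parV_eq_none_iff]; exact hj, rfl⟩
    · refine ⟨⟨i, k⟩, ?_, rfl⟩
      rw [eq_comm, parV_eq_some_iff]
      exact ⟨rfl, hk⟩
  · rintro ⟨⟨i, j⟩, rfl, rfl⟩
    by_cases h : (j : ℕ) = 0
    · refine ⟨i, j, Or.inl ⟨?_, rfl, h⟩⟩
      rw [parV_eq_none_iff]; exact h
    · refine ⟨i, ⟨(j : ℕ) - 1, lt_of_le_of_lt (Nat.sub_le _ _) j.isLt⟩,
        Or.inr ⟨j, ?_, rfl, by dsimp; omega⟩⟩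

      rw [parV_eq_some_iff]
      refine ⟨rfl, ?_⟩
      dsimp
      omega

lemma spider_adj (u v : Vtx d y) :
    (spider d y).Adj u v ↔
      (∃ p, u = parV p ∧ v = some p) ∨ (∃ p, v = parV p ∧ u = some p) := by
  rw [spider, fromRel_adj]
  rw [rel_iff, rel_iff]
  constructor
  · rintro ⟨-, h⟩; exact h
  · rintro (⟨p, rfl, rfl⟩ | ⟨p, rfl, rfl⟩)
    · exact ⟨(parV_ne_some_self p), Or.inl ⟨p, rfl, rfl⟩⟩
    · exact ⟨fun h => parV_ne_some_self p h.symm, Or.inr ⟨p, rfl, rfl⟩⟩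

end SpiderAux

namespace SpiderAux
variable {d : ℕ} {y : Fin d → ℕ}

lemma nbr_none (hy0 : ∀ i, 0 < y i) :
    (spider d y).neighborSet none =
      Set.range (fun i : Fin d => (some ⟨i, ⟨0, hy0 i⟩⟩ : Vtx d y)) := by
  ext v
  rw [mem_neighborSet, spider_adj]
  constructor
  · rintro (⟨p, hp, rfl⟩ | ⟨p, hp, h⟩)
    · rw [eq_comm, parV_eq_none_iff] at hp
      refine ⟨p.1, ?_⟩
      dsimp
      rw [Option.some_inj, sigma_eq_iff]
      exact ⟨rfl, by dsimp; omega⟩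
    · exact absurd h (by simp)
  · rintro ⟨i, rfl⟩
    exact Or.inl ⟨⟨i, ⟨0, hy0 i⟩⟩, by rw [eq_comm, parV_eq_none_iff], rfl⟩

lemma nbr_leaf (p : Σ i : Fin d, Fin (y i)) (h : (p.2 : ℕ) + 1 = y p.1) :
    (spider d y).neighborSet (some p) = {parV p} := by
  ext v
  rw [mem_neighborSet, spider_adj]
  constructor
  · rintro (⟨q, hq, rfl⟩ | ⟨q, hq, hs⟩)
    · rw [eq_comm, parV_eq_some_iff] at hq
      have hlt := q.2.isLt
      have hyy : y p.fst = y q.fst := congrArg y hq.1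
      omega
    · rw [Option.some_inj] at hs
      subst hs
      exact hq
  · rintro rfl
    exact Or.inr ⟨p, rfl, rfl⟩

lemma nbr_mid (p : Σ i : Fin d, Fin (y i)) (h : (p.2 : ℕ) + 1 < y p.1) :
    (spider d y).neighborSet (some p) =
      {parV p, some ⟨p.1, ⟨(p.2 : ℕ) + 1, h⟩⟩} := by
  ext v
  rw [mem_neighborSet, spider_adj]
  constructor
  · rintro (⟨q, hq, rfl⟩ | ⟨q, hq, hs⟩)
    · rw [eq_comm, parV_eq_some_iff] at hq
      refine Or.inr ?_
      rw [Set.mem_singleton_iff, Option.some_inj, sigma_eq_iff]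
      exact ⟨hq.1.symm, by dsimp; omega⟩
    · rw [Option.some_inj] at hs
      subst hs
      exact Or.inl hq
  · rintro (rfl | hv)
    · exact Or.inr ⟨p, rfl, rfl⟩
    · rw [Set.mem_singleton_iff] at hv
      subst hv
      refine Or.inl ⟨_, ?_, rfl⟩
      rw [eq_comm, parV_eq_some_iff]
      exact ⟨rfl, rfl⟩

lemma parV_ne_child (p : Σ i : Fin d, Fin (y i)) (h : (p.2 : ℕ) + 1 < y p.1) :
    parV p ≠ some ⟨p.1, ⟨(p.2 : ℕ) + 1, h⟩⟩ := by
  intro hc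
  rw [parV_eq_some_iff] at hc
  dsimp at hc
  omega

end SpiderAux

namespace SpiderAux
variable {d : ℕ} (y : Fin d → ℕ)

def qQ (i : Fin d) : ℕ := ∑ i' ∈ Finset.univ.filter (fun i' => i' < i), y i' / 2

def TT : ℕ := ∑ i, y i / 2

def mm : ℕ := ∑ i, y i

def lbl (i : Fin d) (s : ℕ) : ℕ :=
  if s % 2 = 1 then mm y + 1 - (qQ y i + (s + 1) / 2) else qQ y i + s / 2

def eval (p : Σ i : Fin d, Fin (y i)) : ℕ := lbl y p.1 (y p.1 - (p.2 : ℕ))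

def hfun (u v : Vtx d y) : ℕ :=
  v.elim 0 (fun p => if u = parV p then eval y p else 0)

def fF : Sym2 (Vtx d y) → ℕ :=
  Sym2.lift ⟨fun u v => hfun y u v + hfun y v u, fun u v => add_comm _ _⟩

lemma fF_mk (u v : Vtx d y) : fF y s(u, v) = hfun y u v + hfun y v u := rfl

lemma fF_edge (p : Σ i : Fin d, Fin (y i)) : fF y s(parV p, some p) = eval y p := by
  rw [fF_mk]
  have h1 : hfun y (parV p) (some p) = eval y p := by
    simp [hfun]
  have h2 : hfun y (some p) (parV p) = 0 := by
    rcases hpar : parV p with _ | p'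
    · rfl
    · simp only [hfun, Option.elim_some]
      rw [if_neg]
      intro hc
      rw [parV_eq_some_iff] at hpar
      rw [eq_comm, parV_eq_some_iff] at hc
      omega
  omega

lemma fF_edge' (p : Σ i : Fin d, Fin (y i)) : fF y s(some p, parV p) = eval y p := by
  rw [Sym2.eq_swap, fF_edge]

variable {y}

lemma mm_eq (hy : ∀ i, y i % 2 = 0) : mm y = 2 * TT y := by
  rw [mm, TT, Finset.mul_sum]
  exact Finset.sum_congr rfl fun i _ => by have := hy i; omega

lemma qT (i : Fin d) : qQ y i + y i / 2 ≤ TT y := by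
  rw [qQ, TT]
  rw [← Finset.sum_filter_add_sum_filter_not Finset.univ (fun i' => i' < i) (fun i' => y i' / 2)]
  have : y i / 2 ≤ ∑ i' ∈ Finset.univ.filter (fun i' => ¬ i' < i), y i' / 2 := by
    apply Finset.single_le_sum (f := fun i' => y i' / 2) (fun j _ => Nat.zero_le _)
    exact Finset.mem_filter.2 ⟨Finset.mem_univ _, lt_irrefl i⟩
  omega

lemma q_lt (i i' : Fin d) (h : i < i') : qQ y i + y i / 2 ≤ qQ y i' := by
  rw [qQ, qQ]
  have hsub : insert i (Finset.univ.filter (fun j => j < i)) ⊆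
      Finset.univ.filter (fun j => j < i') := by
    intro j hj
    simp only [Finset.mem_insert, Finset.mem_filter, Finset.mem_univ, true_and] at hj ⊢
    rcases hj with rfl | hj
    · exact h
    · exact lt_trans hj h
  calc ∑ i' ∈ Finset.univ.filter (fun i' => i' < i), y i' / 2 + y i / 2
      = ∑ j ∈ insert i (Finset.univ.filter (fun j => j < i)), y j / 2 := by
        rw [Finset.sum_insert (by simp)]; omega
    _ ≤ _ := Finset.sum_le_sum_of_subset hsub

lemma q_zero (i : Fin d) (h : (i : ℕ) = 0) : qQ y i = 0 := by
  rw [qQ]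
  apply Finset.sum_eq_zero
  intro j hj
  simp only [Finset.mem_filter] at hj
  have : (j : ℕ) < (i : ℕ) := hj.2
  omega

end SpiderAux

namespace SpiderAux
variable {d : ℕ} {y : Fin d → ℕ}

lemma two_sum_q (hy2 : ∀ i, y i % 2 = 0) :
    2 * ∑ i, qQ y i = ∑ i : Fin d, (d - 1 - (i : ℕ)) * y i := by
  have h1 : ∑ i, qQ y i = ∑ i' : Fin d, (d - 1 - (i' : ℕ)) * (y i' / 2) := by
    unfold qQ
    simp_rw [Finset.sum_filter]
    rw [Finset.sum_comm]
    refine Finset.sum_congr rfl fun i' _ => ?_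
    rw [← Finset.sum_filter, Finset.sum_const, smul_eq_mul]
    congr 1
    rw [show Finset.univ.filter (fun i => i' < i) = Finset.Ioi i' by ext j; simp,
      Fin.card_Ioi]
  rw [h1, Finset.mul_sum]
  refine Finset.sum_congr rfl fun i _ => ?_
  have h2 : y i = 2 * (y i / 2) := by have := hy2 i; omega
  rw [show (d - 1 - (i:ℕ)) * y i = (d - 1 - (i:ℕ)) * (2 * (y i / 2)) by rw [← h2]]
  ring

lemma sum_lt_k (hy2 : ∀ i, y i % 2 = 0) (kf : Fin d) :
    ∑ i ∈ Finset.univ.filter (fun i => i < kf), y i = 2 * qQ y kf := by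
  unfold qQ
  rw [Finset.mul_sum]
  exact Finset.sum_congr rfl fun i _ => by have := hy2 i; omega

lemma core_sum_eq (hy2 : ∀ i, y i % 2 = 0) (k : ℕ) (kf : Fin d) (hkf : (kf : ℕ) = k)
    (hsum : ∑ i : Fin d, (d - 1 - (i : ℕ)) * y i =
      ∑ i : Fin d, if k ≤ (i : ℕ) then y i else 0) :
    ∑ i, (qQ y i + y i / 2) = mm y - qQ y kf := by
  have hA : 2 * ∑ i, qQ y i = ∑ i : Fin d, if k ≤ (i : ℕ) then y i else 0 := by
    rw [two_sum_q hy2, hsum]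
  have hsplit : mm y = 2 * qQ y kf + ∑ i : Fin d, if k ≤ (i : ℕ) then y i else 0 := by
    rw [mm, ← Finset.sum_filter_add_sum_filter_not Finset.univ (fun i => i < kf) y,
      sum_lt_k hy2 kf]
    congr 1
    rw [Finset.sum_filter]
    refine Finset.sum_congr rfl fun i _ => ?_
    have : ¬ i < kf ↔ k ≤ (i : ℕ) := by
      rw [Fin.lt_def, hkf]; omega
    simp only [this]
  have hqT : qQ y kf + y kf / 2 ≤ TT y := qT kf
  have hm2 : mm y = 2 * TT y := mm_eq hy2
  have hsum2 : ∑ i, (qQ y i + y i / 2) = (∑ i, qQ y i) + TT y := by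
    rw [Finset.sum_add_distrib, TT]
  omega

end SpiderAux

namespace SpiderAux
variable {d : ℕ} {y : Fin d → ℕ}

/-- The color pattern. -/
def colorOf (kf : Fin d) : Vtx d y → ℕ := fun v =>
  v.elim (mm y - qQ y kf) (fun p => if (p.2 : ℕ) + 1 = y p.1 then mm y - qQ y p.1
      else if (p.2 : ℕ) % 2 = 0 then mm y + 1 else mm y)

lemma lbl_pair (hy2 : ∀ i, y i % 2 = 0) (i : Fin d) (s : ℕ) (h1 : 1 ≤ s)
    (h2 : s + 1 ≤ y i) :
    lbl y i (s + 1) + lbl y i s = if s % 2 = 1 then mm y + 1 else mm y := by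
  have hq := qT (y := y) i
  have hm := mm_eq hy2
  have hyi := hy2 i
  unfold lbl
  split_ifs <;> omega

lemma lbl_one (hy2 : ∀ i, y i % 2 = 0) (i : Fin d) (hpos : 0 < y i) :
    lbl y i 1 = mm y - qQ y i := by
  have hq := qT (y := y) i
  have hm := mm_eq hy2
  have hyi := hy2 i
  unfold lbl
  split_ifs <;> omega

lemma lbl_top (hy2 : ∀ i, y i % 2 = 0) (i : Fin d) :
    lbl y i (y i) = qQ y i + y i / 2 := by
  have hyi := hy2 i
  unfold lbl
  split_ifs <;> omega

lemma vsum_none (hy0 : ∀ i, 0 < y i) (hy2 : ∀ i, y i % 2 = 0) :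
    vertexSum (spider d y) (fF y) none = ∑ i, (qQ y i + y i / 2) := by
  rw [vertexSum, nbr_none hy0]
  rw [finsum_mem_range (by
    intro a b h
    rw [Option.some_inj, sigma_eq_iff] at h
    exact h.1)]
  rw [finsum_eq_sum_of_fintype]
  refine Finset.sum_congr rfl fun i _ => ?_
  have hpar : parV (⟨i, ⟨0, hy0 i⟩⟩ : Σ i : Fin d, Fin (y i)) = none := by
    rw [parV_eq_none_iff]
  rw [show (none : Vtx d y) = parV (⟨i, ⟨0, hy0 i⟩⟩ : Σ i : Fin d, Fin (y i)) from hpar.symm]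
  rw [fF_edge]
  unfold eval
  simp only [Nat.sub_zero]
  exact lbl_top hy2 i

lemma vsum_leaf (hy2 : ∀ i, y i % 2 = 0) (p : Σ i : Fin d, Fin (y i))
    (h : (p.2 : ℕ) + 1 = y p.1) :
    vertexSum (spider d y) (fF y) (some p) = mm y - qQ y p.1 := by
  rw [vertexSum, nbr_leaf p h, finsum_mem_singleton, fF_edge']
  unfold eval
  rw [show y p.1 - (p.2 : ℕ) = 1 by omega]
  exact lbl_one hy2 p.1 (by omega)

lemma vsum_mid (hy2 : ∀ i, y i % 2 = 0) (p : Σ i : Fin d, Fin (y i))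
    (h : (p.2 : ℕ) + 1 < y p.1) :
    vertexSum (spider d y) (fF y) (some p) =
      if (p.2 : ℕ) % 2 = 0 then mm y + 1 else mm y := by
  rw [vertexSum, nbr_mid p h, finsum_mem_pair (parV_ne_child p h), fF_edge']
  have hpar : parV (⟨p.1, ⟨(p.2 : ℕ) + 1, h⟩⟩ : Σ i : Fin d, Fin (y i)) = some p := by
    rw [parV_eq_some_iff]
    exact ⟨rfl, rfl⟩
  rw [show s(some p, (some ⟨p.1, ⟨(p.2 : ℕ) + 1, h⟩⟩ : Vtx d y)) =
    s(parV ⟨p.1, ⟨(p.2 : ℕ) + 1, h⟩⟩, some ⟨p.1, ⟨(p.2 : ℕ) + 1, h⟩⟩) by rw [hpar]]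
  rw [fF_edge]
  unfold eval
  dsimp only
  set s : ℕ := y p.1 - ((p.2 : ℕ) + 1) with hs
  have h1 : 1 ≤ s := by omega
  have h2 : s + 1 ≤ y p.1 := by omega
  have h3 : y p.1 - (p.2 : ℕ) = s + 1 := by omega
  rw [h3]
  rw [lbl_pair hy2 p.1 s h1 h2]
  have hyp := hy2 p.1
  have : s % 2 = 1 ↔ (p.2 : ℕ) % 2 = 0 := by omega
  simp only [this]

end SpiderAux

namespace SpiderAux
variable {d : ℕ} {y : Fin d → ℕ}

def Ee (p : Σ i : Fin d, Fin (y i)) : Sym2 (Vtx d y) := s(parV p, some p)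

lemma edgeSet_eq : (spider d y).edgeSet = Set.range (Ee (y := y)) := by
  ext e
  induction e using Sym2.ind with
  | _ a b =>
    rw [mem_edgeSet, spider_adj]
    constructor
    · rintro (⟨p, rfl, rfl⟩ | ⟨p, rfl, rfl⟩)
      · exact ⟨p, rfl⟩
      · exact ⟨p, Sym2.eq_swap⟩
    · rintro ⟨p, hp⟩
      unfold Ee at hp
      rw [Sym2.eq_iff] at hp
      rcases hp with ⟨h1, h2⟩ | ⟨h1, h2⟩
      · exact Or.inl ⟨p, h1.symm, h2.symm⟩
      · exact Or.inr ⟨p, h1.symm, h2.symm⟩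

lemma Ee_inj : Function.Injective (Ee (y := y)) := by
  intro p q h
  unfold Ee at h
  rw [Sym2.eq_iff] at h
  rcases h with ⟨h1, h2⟩ | ⟨h1, h2⟩
  · exact Option.some_inj.mp h2
  · exfalso
    rw [parV_eq_some_iff] at h1
    rw [eq_comm, parV_eq_some_iff] at h2
    omega

lemma edge_card : (spider d y).edgeSet.ncard = mm y := by
  rw [edgeSet_eq, ← Nat.card_coe_set_eq, Nat.card_range_of_injective Ee_inj,
    Nat.card_eq_fintype_card, Fintype.card_sigma]
  simp [mm]

lemma fF_Ee (p : Σ i : Fin d, Fin (y i)) : fF y (Ee p) = eval y p := fF_edge y p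

lemma eval_bounds (hy2 : ∀ i, y i % 2 = 0) (hy0 : ∀ i, 0 < y i)
    (p : Σ i : Fin d, Fin (y i)) : 1 ≤ eval y p ∧ eval y p ≤ mm y := by
  have hq := qT (y := y) p.1
  have hm := mm_eq hy2
  have hyi := hy2 p.1
  have hlt := p.2.isLt
  unfold eval lbl
  split_ifs <;> omega

lemma lbl_inj (hy2 : ∀ i, y i % 2 = 0) {i i' : Fin d} {s s' : ℕ}
    (hs1 : 1 ≤ s) (hs2 : s ≤ y i) (hs1' : 1 ≤ s') (hs2' : s' ≤ y i')
    (h : lbl y i s = lbl y i' s') : i = i' ∧ s = s' := by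
  have hq := qT (y := y) i
  have hq' := qT (y := y) i'
  have hm := mm_eq hy2
  have hyi := hy2 i
  have hyi' := hy2 i'
  have hii' : i = i' := by
    by_contra hne
    rcases lt_or_gt_of_ne hne with hlt | hlt
    · have := q_lt (y := y) i i' hlt
      unfold lbl at h
      split_ifs at h <;> omega
    · have := q_lt (y := y) i' i hlt
      unfold lbl at h
      split_ifs at h <;> omega
  subst hii'
  refine ⟨rfl, ?_⟩
  unfold lbl at h
  split_ifs at h <;> omega

lemma eval_inj (hy2 : ∀ i, y i % 2 = 0) : Function.Injective (eval (y := y)) := by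
  intro p q h
  unfold eval at h
  have hp := p.2.isLt
  have hq := q.2.isLt
  obtain ⟨h1, h2⟩ := lbl_inj hy2 (by omega) (by omega) (by omega) (by omega) h
  rw [sigma_eq_iff]
  have hyy : y p.1 = y q.1 := congrArg y h1
  exact ⟨h1, by omega⟩

lemma fF_bijOn (hy2 : ∀ i, y i % 2 = 0) (hy0 : ∀ i, 0 < y i) :
    Set.BijOn (fF y) (spider d y).edgeSet
      (Set.Icc 1 (spider d y).edgeSet.ncard) := by
  rw [edge_card, edgeSet_eq]
  have hmaps : Set.MapsTo (fF y) (Set.range (Ee (y := y))) (Set.Icc 1 (mm y)) := by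
    rintro e ⟨p, rfl⟩
    rw [fF_Ee]
    exact eval_bounds hy2 hy0 p
  have hinj : Set.InjOn (fF y) (Set.range (Ee (y := y))) := by
    rintro e ⟨p, rfl⟩ e' ⟨q, rfl⟩ h
    rw [fF_Ee, fF_Ee] at h
    rw [eval_inj hy2 h]
  refine ⟨hmaps, hinj, ?_⟩
  have hsub : fF y '' (Set.range (Ee (y := y))) ⊆ Set.Icc 1 (mm y) :=
    Set.mapsTo_iff_image_subset.mp hmaps
  have hcard1 : (fF y '' (Set.range (Ee (y := y)))).ncard = mm y := by
    rw [Set.ncard_image_of_injOn hinj, ← edgeSet_eq, edge_card]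
  have hcard2 : (Set.Icc 1 (mm y)).ncard = mm y := by
    rw [← Finset.coe_Icc, Set.ncard_coe_finset, Nat.card_Icc]; omega
  have heq := Set.eq_of_subset_of_ncard_le hsub (by omega) (Set.finite_Icc _ _)
  rw [Set.SurjOn, heq]

end SpiderAux

namespace SpiderAux
variable {d : ℕ} {y : Fin d → ℕ}

lemma vsum_all (hy2 : ∀ i, y i % 2 = 0) (hyg : ∀ i, 2 ≤ y i) (k : ℕ) (kf : Fin d)
    (hkf : (kf : ℕ) = k)
    (hsum : ∑ i : Fin d, (d - 1 - (i : ℕ)) * y i =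
      ∑ i : Fin d, if k ≤ (i : ℕ) then y i else 0)
    (v : Vtx d y) :
    vertexSum (spider d y) (fF y) v = colorOf kf v := by
  have hy0 : ∀ i, 0 < y i := fun i => by have := hyg i; omega
  match v with
  | none =>
    rw [vsum_none hy0 hy2, core_sum_eq hy2 k kf hkf hsum]
    rfl
  | some p =>
    have hlt := p.2.isLt
    by_cases hleaf : (p.2 : ℕ) + 1 = y p.1
    · rw [vsum_leaf hy2 p hleaf]
      simp only [colorOf, Option.elim_some]
      rw [if_pos hleaf]
    · rw [vsum_mid hy2 p (by omega)]
      simp only [colorOf, Option.elim_some]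
      rw [if_neg hleaf]

lemma q_lt_mm (hy2 : ∀ i, y i % 2 = 0) (hyg : ∀ i, 2 ≤ y i) (i : Fin d) :
    qQ y i < mm y := by
  have hq := qT (y := y) i
  have hm := mm_eq hy2
  have := hyg i
  omega

lemma colorOf_adj (hy2 : ∀ i, y i % 2 = 0) (hyg : ∀ i, 2 ≤ y i) (kf : Fin d)
    {u v : Vtx d y} (h : (spider d y).Adj u v) : colorOf kf u ≠ colorOf kf v := by
  have key : ∀ p : Σ i : Fin d, Fin (y i),
      colorOf (y := y) kf (parV p) ≠ colorOf kf (some p) := by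
    intro p
    have hlt := p.2.isLt
    have hyp := hyg p.1
    have hyp2 := hy2 p.1
    rcases hpar : parV p with _ | p'
    · rw [parV_eq_none_iff] at hpar
      have hqk := q_lt_mm hy2 hyg kf
      simp only [colorOf, Option.elim_some, Option.elim_none]
      split_ifs <;> omega
    · rw [parV_eq_some_iff] at hpar
      obtain ⟨h1, h2⟩ := hpar
      have hyy : y p'.1 = y p.1 := congrArg y h1
      have hlt' := p'.2.isLt
      have hq := q_lt_mm hy2 hyg p.1
      simp only [colorOf, Option.elim_some]
      split_ifs <;> omega
  rw [spider_adj] at h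
  rcases h with ⟨p, rfl, rfl⟩ | ⟨p, rfl, rfl⟩
  · exact key p
  · exact (key p).symm

end SpiderAux

namespace SpiderAux
variable {d : ℕ} {y : Fin d → ℕ}

lemma neg_q_inj (hy2 : ∀ i, y i % 2 = 0) (hyg : ∀ i, 2 ≤ y i) :
    Function.Injective (fun i : Fin d => mm y - qQ y i) := by
  intro a b h
  dsimp at h
  have ha := q_lt_mm hy2 hyg a
  have hb := q_lt_mm hy2 hyg b
  by_contra hne
  rcases lt_or_gt_of_ne hne with hlt | hlt
  · have := q_lt (y := y) a b hlt
    have := hyg a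
    omega
  · have := q_lt (y := y) b a hlt
    have := hyg b
    omega

lemma range_vsum (hy2 : ∀ i, y i % 2 = 0) (hyg : ∀ i, 2 ≤ y i) (hd : 0 < d)
    (k : ℕ) (kf : Fin d) (hkf : (kf : ℕ) = k)
    (hsum : ∑ i : Fin d, (d - 1 - (i : ℕ)) * y i =
      ∑ i : Fin d, if k ≤ (i : ℕ) then y i else 0) :
    Set.range (vertexSum (spider d y) (fF y)) =
      insert (mm y + 1) (Set.range (fun i : Fin d => mm y - qQ y i)) := by
  have hfe : vertexSum (spider d y) (fF y) = colorOf kf :=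
    funext (vsum_all hy2 hyg k kf hkf hsum)
  rw [hfe]
  set i0 : Fin d := ⟨0, hd⟩ with hi0
  ext x
  constructor
  · rintro ⟨v, rfl⟩
    match v with
    | none => exact Set.mem_insert_iff.mpr (Or.inr ⟨kf, rfl⟩)
    | some p =>
      simp only [colorOf, Option.elim_some]
      split_ifs with h1 h2
      · exact Set.mem_insert_iff.mpr (Or.inr ⟨p.1, rfl⟩)
      · exact Set.mem_insert _ _
      · refine Set.mem_insert_iff.mpr (Or.inr ⟨i0, ?_⟩)
        dsimp
        rw [q_zero i0 rfl, Nat.sub_zero]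
  · rintro (rfl | ⟨i, rfl⟩)
    · refine ⟨some ⟨i0, ⟨0, by have := hyg i0; omega⟩⟩, ?_⟩
      simp only [colorOf, Option.elim_some]
      rw [if_neg (show ¬((0:ℕ) + 1 = y i0) by have := hyg i0; omega)]
      simp
    · refine ⟨some ⟨i, ⟨y i - 1, by have := hyg i; omega⟩⟩, ?_⟩
      simp only [colorOf, Option.elim_some]
      rw [if_pos (show y i - 1 + 1 = y i by have := hyg i; omega)]

lemma colorCount_fF (hy2 : ∀ i, y i % 2 = 0) (hyg : ∀ i, 2 ≤ y i) (hd : 0 < d)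
    (k : ℕ) (kf : Fin d) (hkf : (kf : ℕ) = k)
    (hsum : ∑ i : Fin d, (d - 1 - (i : ℕ)) * y i =
      ∑ i : Fin d, if k ≤ (i : ℕ) then y i else 0) :
    colorCount (spider d y) (fF y) = d + 1 := by
  rw [colorCount, range_vsum hy2 hyg hd k kf hkf hsum]
  have hnot : mm y + 1 ∉ Set.range (fun i : Fin d => mm y - qQ y i) := by
    rintro ⟨i, hi⟩
    dsimp at hi
    omega
  rw [Set.ncard_insert_of_notMem hnot (Set.finite_range _)]
  have hre : Set.range (fun i : Fin d => mm y - qQ y i) =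
      ↑(Finset.univ.image (fun i : Fin d => mm y - qQ y i)) := by
    rw [Finset.coe_image, Finset.coe_univ, Set.image_univ]
  rw [hre, Set.ncard_coe_finset,
    Finset.card_image_of_injective _ (neg_q_inj hy2 hyg), Finset.card_univ,
    Fintype.card_fin]

lemma isLA_fF (hy2 : ∀ i, y i % 2 = 0) (hyg : ∀ i, 2 ≤ y i)
    (k : ℕ) (kf : Fin d) (hkf : (kf : ℕ) = k)
    (hsum : ∑ i : Fin d, (d - 1 - (i : ℕ)) * y i =
      ∑ i : Fin d, if k ≤ (i : ℕ) then y i else 0) :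
    IsLocalAntimagic (spider d y) (fF y) := by
  refine ⟨fF_bijOn hy2 (fun i => by have := hyg i; omega), fun u v hadj => ?_⟩
  rw [vsum_all hy2 hyg k kf hkf hsum, vsum_all hy2 hyg k kf hkf hsum]
  exact colorOf_adj hy2 hyg kf hadj

end SpiderAux

namespace SpiderAux
variable {d : ℕ} {y : Fin d → ℕ}

lemma vsum_mid_generic (f : Sym2 (Vtx d y) → ℕ) (u : Σ i : Fin d, Fin (y i))
    (hu : (u.2 : ℕ) + 1 < y u.1) :
    vertexSum (spider d y) f (some u) = f (Ee u) + f (Ee ⟨u.1, ⟨(u.2 : ℕ) + 1, hu⟩⟩) := by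
  have hpar : parV (⟨u.1, ⟨(u.2 : ℕ) + 1, hu⟩⟩ : Σ i : Fin d, Fin (y i)) = some u := by
    rw [parV_eq_some_iff]
    exact ⟨rfl, rfl⟩
  rw [vertexSum, nbr_mid u hu, finsum_mem_pair (parV_ne_child u hu),
    show s(some u, parV u) = Ee u from Sym2.eq_swap,
    show s(some u, (some ⟨u.1, ⟨(u.2 : ℕ) + 1, hu⟩⟩ : Vtx d y)) =
      Ee ⟨u.1, ⟨(u.2 : ℕ) + 1, hu⟩⟩ by rw [Ee, hpar]]

lemma vsum_mid_nat (f : Sym2 (Vtx d y) → ℕ) (i : Fin d) (j : ℕ) (hj0 : j < y i)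
    (hj : j + 1 < y i) :
    vertexSum (spider d y) f (some ⟨i, ⟨j, hj0⟩⟩) =
      f (Ee ⟨i, ⟨j, hj0⟩⟩) + f (Ee ⟨i, ⟨j + 1, hj⟩⟩) :=
  vsum_mid_generic f ⟨i, ⟨j, hj0⟩⟩ hj

lemma vsum_leaf_generic (f : Sym2 (Vtx d y) → ℕ) (p : Σ i : Fin d, Fin (y i))
    (h : (p.2 : ℕ) + 1 = y p.1) :
    vertexSum (spider d y) f (some p) = f (Ee p) := by
  rw [vertexSum, nbr_leaf p h, finsum_mem_singleton,
    show s(some p, parV p) = Ee p from Sym2.eq_swap]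

lemma lower_bound (hyg : ∀ i, 2 ≤ y i) (hd : 2 ≤ d) (f : Sym2 (Vtx d y) → ℕ)
    (hf : IsLocalAntimagic (spider d y) f) :
    d + 1 ≤ colorCount (spider d y) f := by
  obtain ⟨hbij, -⟩ := hf
  rw [edge_card] at hbij
  have hy0 : ∀ i, 0 < y i := fun i => by have := hyg i; omega
  have hEmem : ∀ p : Σ i : Fin d, Fin (y i), Ee p ∈ (spider d y).edgeSet := by
    intro p
    rw [edgeSet_eq]
    exact ⟨p, rfl⟩
  have hIcc : ∀ p : Σ i : Fin d, Fin (y i), 1 ≤ f (Ee p) ∧ f (Ee p) ≤ mm y := by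
    intro p
    have := hbij.1 (hEmem p)
    rw [Set.mem_Icc] at this
    exact this
  -- leaf vertices
  have hleafsum : ∀ i : Fin d, vertexSum (spider d y) f
      (some ⟨i, ⟨y i - 1, by have := hyg i; omega⟩⟩) =
      f (Ee ⟨i, ⟨y i - 1, by have := hyg i; omega⟩⟩) := by
    intro i
    exact vsum_leaf_generic f _ (by dsimp; have := hyg i; omega)
  -- big vertex
  have hmm1 : 1 ≤ mm y := by
    have : 2 ≤ mm y := le_trans (hyg ⟨0, by omega⟩)
      (Finset.single_le_sum (f := y) (fun j _ => Nat.zero_le _) (Finset.mem_univ _))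
    omega
  obtain ⟨e, hemem, hfe⟩ := hbij.2.2 (Set.mem_Icc.mpr ⟨hmm1, le_refl _⟩)
  rw [edgeSet_eq] at hemem
  obtain ⟨p, rfl⟩ := hemem
  have hbig : ∃ w : Vtx d y, mm y + 1 ≤ vertexSum (spider d y) f w := by
    have hplt := p.2.isLt
    by_cases hpl : (p.2 : ℕ) + 1 = y p.1
    · have h1 : (p.2 : ℕ) - 1 < y p.1 := by omega
      have h2 : (p.2 : ℕ) - 1 + 1 < y p.1 := by have := hyg p.1; omega
      refine ⟨some ⟨p.1, ⟨(p.2 : ℕ) - 1, h1⟩⟩, ?_⟩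
      rw [vsum_mid_nat f p.1 ((p.2 : ℕ) - 1) h1 h2]
      have hchild : (⟨p.1, ⟨(p.2 : ℕ) - 1 + 1, h2⟩⟩ : Σ i : Fin d, Fin (y i)) = p := by
        rw [sigma_eq_iff]
        exact ⟨rfl, by dsimp; omega⟩
      rw [hchild, hfe]
      have := (hIcc ⟨p.1, ⟨(p.2 : ℕ) - 1, h1⟩⟩).1
      omega
    · have h2 : (p.2 : ℕ) + 1 < y p.1 := by omega
      refine ⟨some p, ?_⟩
      have hrw := vsum_mid_generic f p h2
      rw [hrw, hfe]
      have := (hIcc ⟨p.1, ⟨(p.2 : ℕ) + 1, h2⟩⟩).1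
      omega
  obtain ⟨w, hw⟩ := hbig
  -- assemble
  set L : Fin d → ℕ := fun i =>
    vertexSum (spider d y) f (some ⟨i, ⟨y i - 1, by have := hyg i; omega⟩⟩) with hL
  have hLle : ∀ i, L i ≤ mm y := by
    intro i
    rw [hL]
    dsimp only
    rw [hleafsum i]
    exact (hIcc _).2
  have hLinj : Function.Injective L := by
    intro a b hab
    rw [hL] at hab
    dsimp only at hab
    rw [hleafsum a, hleafsum b] at hab
    have := hbij.2.1 (hEmem _) (hEmem _) hab
    have h2 := Ee_inj this
    rw [sigma_eq_iff] at h2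
    exact h2.1
  have hsub : insert (vertexSum (spider d y) f w) (Set.range L) ⊆
      Set.range (vertexSum (spider d y) f) := by
    rintro x (rfl | ⟨i, rfl⟩)
    · exact ⟨w, rfl⟩
    · exact ⟨_, rfl⟩
  have hnot : vertexSum (spider d y) f w ∉ Set.range L := by
    rintro ⟨i, hi⟩
    have := hLle i
    omega
  have hcard : (insert (vertexSum (spider d y) f w) (Set.range L)).ncard = d + 1 := by
    rw [Set.ncard_insert_of_notMem hnot (Set.finite_range _)]
    have hre : Set.range L = ↑(Finset.univ.image L) := by
      rw [Finset.coe_image, Finset.coe_univ, Set.image_univ]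
    rw [hre, Set.ncard_coe_finset, Finset.card_image_of_injective _ hLinj,
      Finset.card_univ, Fintype.card_fin]
  rw [colorCount, ← hcard]
  exact Set.ncard_le_ncard hsub (Set.finite_range _)

end SpiderAux


theorem stmt9 (d : ℕ) (hd : 2 ≤ d) (y : Fin d → ℕ)
    (hy : ∀ i, 2 ≤ y i ∧ Even (y i))
    (k : ℕ) (hk : k ≤ d - 1)
    (hsum : ∑ i : Fin d, (d - 1 - (i : ℕ)) * y i =
            ∑ i : Fin d, if k ≤ (i : ℕ) then y i else 0) :
    chiLA (spider d y) = d + 1 := by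
  have hy2 : ∀ i, y i % 2 = 0 := fun i => Nat.even_iff.mp (hy i).2
  have hyg : ∀ i, 2 ≤ y i := fun i => (hy i).1
  have hkd : k < d := by omega
  have hmem : d + 1 ∈ {n | ∃ f, IsLocalAntimagic (spider d y) f ∧
      colorCount (spider d y) f = n} :=
    ⟨SpiderAux.fF y, SpiderAux.isLA_fF hy2 hyg k ⟨k, hkd⟩ rfl hsum,
      SpiderAux.colorCount_fF hy2 hyg (by omega) k ⟨k, hkd⟩ rfl hsum⟩
  rw [chiLA]
  refine le_antisymm (Nat.sInf_le hmem) ?_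
  refine le_csInf ⟨_, hmem⟩ ?_
  rintro n ⟨f, hf, rfl⟩
  exact SpiderAux.lower_bound hyg hd f hf
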